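/- Let P be a finite poset, R a consistent restriction function on P, p ∈ P, and k ∈ R(p) with k ≠ max R(p). Then there is exactly one meet-irreducible element f of the lattice Inc_R(P) such that f(p) = k and p is the only raisable element of f. -/

import Mathlib

/-- An increasing labeling of the finite poset `P` with respect to the
restriction function `R`. -/
def IncLabel {P : Type*} [PartialOrder P] (R : P → Finset ℤ) (f : P → ℤ) : Prop :=
  (∀ p, f p ∈ R p) ∧ ∀ ⦃p₁ p₂ : P⦄, p₁ < p₂ → f p₁ < f p₂

/-- `R` is consistent: minima and maxima of the label sets strictly increase
along covering relations. -/
def Consistent {P : Type*} [PartialOrder P] (R : P → Finset ℤ)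
    (hR : ∀ p, (R p).Nonempty) : Prop :=
  ∀ x y : P, x ⋖ y →
    (R x).min' (hR x) < (R y).min' (hR y) ∧ (R x).max' (hR x) < (R y).max' (hR y)

/-- An element `p` is raisable in `f` if its value can be strictly increased,
keeping all other values fixed, while remaining an increasing labeling. -/
def Raisable {P : Type*} [PartialOrder P] (R : P → Finset ℤ) (f : P → ℤ) (p : P) : Prop :=
  ∃ g : P → ℤ, IncLabel R g ∧ f p < g p ∧ ∀ p' : P, p' ≠ p → f p' = g p'

/-- `f` is a meet-irreducible element of the lattice `Inc_R(P)` (ordered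
pointwise, with meet given by pointwise minimum): it is not the maximum
element, and whenever it is the meet of two elements it equals one of them. -/
def MeetIrred {P : Type*} [PartialOrder P] (R : P → Finset ℤ) (f : P → ℤ) : Prop :=
  IncLabel R f ∧ ¬ (∀ g : P → ℤ, IncLabel R g → ∀ p, g p ≤ f p) ∧
  ∀ a b : P → ℤ, IncLabel R a → IncLabel R b →
    (f = fun p => min (a p) (b p)) → f = a ∨ f = b

/-- For each `p ∈ P` and `k ∈ R(p)` with `k ≠ max R(p)`, there is exactly one
meet-irreducible increasing labeling `f` with `f p = k` having `p` as its
only raisable element. -/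
theorem stmt4 {P : Type*} [Fintype P] [PartialOrder P]
    (R : P → Finset ℤ) (hR : ∀ p, (R p).Nonempty) (hcons : Consistent R hR)
    (p : P) (k : ℤ) (hk : k ∈ R p) (hkmax : k ≠ (R p).max' (hR p)) :
    ∃! f : P → ℤ, MeetIrred R f ∧ f p = k ∧
      ∀ p' : P, Raisable R f p' ↔ p' = p := by
  classical
  -- min' and max' are strictly monotone along `<`, not just along covers
  have key : ∀ y x : P, x < y →
      (R x).min' (hR x) < (R y).min' (hR y) ∧ (R x).max' (hR x) < (R y).max' (hR y) := by
    intro y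
    induction y using WellFoundedLT.induction with
    | _ y IH =>
      intro x hxy
      obtain ⟨z, hxz, hzy⟩ := exists_le_covBy_of_lt hxy
      rcases eq_or_lt_of_le hxz with rfl | hlt
      · exact hcons _ _ hzy
      · obtain ⟨h1, h2⟩ := IH z hzy.lt x hlt
        obtain ⟨h3, h4⟩ := hcons z y hzy
        exact ⟨h1.trans h3, h2.trans h4⟩
  have maxlab : IncLabel R (fun q => (R q).max' (hR q)) :=
    ⟨fun q => Finset.max'_mem _ _, fun a b hab => (key b a hab).2⟩
  have hkle : k ≤ (R p).max' (hR p) := Finset.le_max' _ _ hk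
  have hklt : k < (R p).max' (hR p) := lt_of_le_of_ne hkle hkmax
  set Q : (P → ℤ) → Prop := fun f => IncLabel R f ∧ f p ≤ k with hQdef
  -- a labeling taking value `k` at `p`
  set g₀ : P → ℤ := fun q =>
    if p < q then (R q).max' (hR q) else if q = p then k else (R q).min' (hR q) with hg₀
  have hg₀mem : ∀ q, g₀ q ∈ R q := by
    intro q
    simp only [hg₀]
    split
    · exact Finset.max'_mem _ _
    · split
      · next h => subst h; exact hk
      · exact Finset.min'_mem _ _
  have hg₀p : g₀ p = k := by simp [hg₀]
  have hg₀inc : ∀ ⦃a b : P⦄, a < b → g₀ a < g₀ b := by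
    intro a b hab
    simp only [hg₀]
    by_cases hpa : p < a
    · rw [if_pos hpa, if_pos (hpa.trans hab)]
      exact (key b a hab).2
    · rw [if_neg hpa]
      by_cases hap : a = p
      · subst hap
        rw [if_pos rfl, if_pos hab]
        exact hklt.trans_le (le_of_lt (key b a hab).2)
      · rw [if_neg hap]
        by_cases hpb : p < b
        · rw [if_pos hpb]
          exact lt_of_lt_of_le (key b a hab).1
            (Finset.min'_le _ _ (Finset.max'_mem _ _))
        · rw [if_neg hpb]
          by_cases hbp : b = p
          · subst hbp
            rw [if_pos rfl]
            exact lt_of_lt_of_le (key b a hab).1 (Finset.min'_le _ _ hk)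
          · rw [if_neg hbp]
            exact (key b a hab).1
  have hg₀Q : Q g₀ := ⟨⟨hg₀mem, hg₀inc⟩, le_of_eq hg₀p⟩
  -- the pointwise maximum of all labelings with value ≤ k at p
  set C : P → Finset ℤ := fun q => (R q).filter (fun v => ∃ f, Q f ∧ f q = v) with hC
  have hCne : ∀ q, (C q).Nonempty :=
    fun q => ⟨g₀ q, Finset.mem_filter.2 ⟨hg₀mem q, g₀, hg₀Q, rfl⟩⟩
  set M : P → ℤ := fun q => (C q).max' (hCne q) with hMdef
  have hfleM : ∀ f, Q f → ∀ q, f q ≤ M q := fun f hf q =>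
    Finset.le_max' _ _ (Finset.mem_filter.2 ⟨hf.1.1 q, f, hf, rfl⟩)
  have hMspec : ∀ q, ∃ f, Q f ∧ f q = M q := fun q =>
    (Finset.mem_filter.1 (Finset.max'_mem _ (hCne q))).2
  have hMmem : ∀ q, M q ∈ R q := fun q =>
    (Finset.mem_filter.1 (Finset.max'_mem _ (hCne q))).1
  have hMinc : ∀ ⦃a b : P⦄, a < b → M a < M b := by
    intro a b hab
    obtain ⟨f, hf, hfa⟩ := hMspec a
    calc M a = f a := hfa.symm
    _ < f b := hf.1.2 hab
    _ ≤ M b := hfleM f hf b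
  have hMlab : IncLabel R M := ⟨hMmem, hMinc⟩
  have hMple : M p ≤ k := by
    obtain ⟨f, hf, hfp⟩ := hMspec p
    rw [← hfp]; exact hf.2
  have hMp : M p = k := by
    have := hfleM g₀ hg₀Q p
    rw [hg₀p] at this
    exact le_antisymm hMple this
  have hMQ : Q M := ⟨hMlab, hMple⟩
  -- M takes the maximal value everywhere off the down-set of p
  have hMmax : ∀ q, ¬ q ≤ p → M q = (R q).max' (hR q) := by
    intro q hq
    set h : P → ℤ := fun r => if r ≤ p then M r else (R r).max' (hR r) with hh
    have hhmem : ∀ r, h r ∈ R r := by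
      intro r; by_cases hr : r ≤ p <;> simp [hh, hr, hMmem, Finset.max'_mem]
    have hhinc : ∀ ⦃a b : P⦄, a < b → h a < h b := by
      intro a b hab
      by_cases hb : b ≤ p
      · have ha : a ≤ p := hab.le.trans hb
        simp only [hh, if_pos ha, if_pos hb]
        exact hMinc hab
      · simp only [hh, if_neg hb]
        by_cases ha : a ≤ p
        · rw [if_pos ha]
          exact lt_of_lt_of_le (hMinc hab) (Finset.le_max' _ _ (hMmem b))
        · rw [if_neg ha]; exact (key b a hab).2
    have hhp : h p ≤ k := by simp [hh, hMp]
    have h1 := hfleM h ⟨⟨hhmem, hhinc⟩, hhp⟩ q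
    simp only [hh, if_neg hq] at h1
    exact le_antisymm (Finset.le_max' _ _ (hMmem q)) h1
  refine ⟨M, ⟨⟨hMlab, ?_, ?_⟩, hMp, ?_⟩, ?_⟩
  · -- M is not the maximum labeling
    intro hall
    have := hall (fun q => (R q).max' (hR q)) maxlab p
    rw [hMp] at this
    exact absurd this (not_le.2 hklt)
  · -- meet irreducibility
    intro a b ha hb hmin
    have h1 : M p = min (a p) (b p) := congrFun hmin p
    rcases le_total (a p) (b p) with h | h
    · left
      have hap : a p = k := by rw [← hMp, h1, min_eq_left h]
      funext q
      refine le_antisymm ?_ (hfleM a ⟨ha, le_of_eq hap⟩ q)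
      rw [congrFun hmin q]
      exact min_le_left _ _
    · right
      have hbp : b p = k := by rw [← hMp, h1, min_eq_right h]
      funext q
      refine le_antisymm ?_ (hfleM b ⟨hb, le_of_eq hbp⟩ q)
      rw [congrFun hmin q]
      exact min_le_right _ _
  · -- raisable iff
    intro q
    constructor
    · rintro ⟨g, hg, hlt, hagree⟩
      by_contra hqp
      by_cases hle : q ≤ p
      · have hgp : g p = k := by
          rw [← hagree p (fun h => hqp h.symm), hMp]
        have := hfleM g ⟨hg, le_of_eq hgp⟩ q
        exact absurd hlt (not_lt.2 this)
      · have h2 : g q ≤ (R q).max' (hR q) := Finset.le_max' _ _ (hg.1 q)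
        rw [← hMmax q hle] at h2
        exact absurd hlt (not_lt.2 h2)
    · intro h
      rw [h]
      -- p is raisable: raise to the next value of R p above k
      have hne : ((R p).filter (fun v => k < v)).Nonempty :=
        ⟨(R p).max' (hR p), Finset.mem_filter.2 ⟨Finset.max'_mem _ _, hklt⟩⟩
      set v : ℤ := ((R p).filter (fun v => k < v)).min' hne with hv
      have hvmem : v ∈ R p ∧ k < v := by
        have := Finset.min'_mem _ hne
        exact Finset.mem_filter.1 this |>.imp id id
      refine ⟨fun r => if r = p then v else M r, ⟨?_, ?_⟩, ?_, ?_⟩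
      · intro r
        by_cases hr : r = p
        · subst hr; simp [hvmem.1]
        · simp [hr, hMmem r]
      · intro a b hab
        dsimp only
        by_cases hb : b = p
        · have ha : a ≠ p := by
            intro h; rw [h, hb] at hab; exact lt_irrefl _ hab
          simp only [if_neg ha, if_pos hb]
          calc M a < M b := hMinc hab
          _ = k := by rw [hb, hMp]
          _ < v := hvmem.2
        · rw [if_neg hb]
          by_cases ha : a = p
          · rw [if_pos ha]
            rw [ha] at hab
            have hbp : ¬ b ≤ p := fun h => hb (le_antisymm h hab.le)
            rw [hMmax b hbp]
            calc v ≤ (R p).max' (hR p) := Finset.le_max' _ _ hvmem.1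
            _ < (R b).max' (hR b) := (key b p hab).2
          · rw [if_neg ha]; exact hMinc hab
      · simp [hMp, hvmem.2]
      · intro r hr; simp [hr]
  · -- uniqueness
    rintro f ⟨⟨hflab, -, -⟩, hfp, hfraise⟩
    have hfle : ∀ q, f q ≤ M q := hfleM f ⟨hflab, le_of_eq hfp⟩
    by_contra hne
    have hTne : (Finset.univ.filter (fun q : P => f q < M q)).Nonempty := by
      by_contra h
      apply hne
      funext q
      refine le_antisymm (hfle q) (not_lt.1 fun hq => h ⟨q, Finset.mem_filter.2 ⟨Finset.mem_univ _, hq⟩⟩)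
    obtain ⟨q, hqT, hqmax⟩ : ∃ q ∈ Finset.univ.filter (fun q : P => f q < M q), ∀ x ∈ Finset.univ.filter (fun q : P => f q < M q), ¬ q < x :=
      (Finset.exists_maximal hTne).imp fun q h => ⟨h.1, fun x hx hlt => not_le_of_gt hlt (h.2 hx hlt.le)⟩
    have hqlt : f q < M q := (Finset.mem_filter.1 hqT).2
    have hqp : q ≠ p := by
      intro h; subst h
      rw [hfp, hMp] at hqlt
      exact lt_irrefl _ hqlt
    -- q is raisable in f, contradiction
    have : Raisable R f q := by
      refine ⟨fun r => if r = q then M q else f r, ⟨?_, ?_⟩, ?_, ?_⟩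
      · intro r
        by_cases hr : r = q
        · subst hr; simp [hMmem r]
        · simp [hr, hflab.1 r]
      · intro a b hab
        dsimp only
        by_cases hb : b = q
        · subst hb
          have ha : a ≠ b := ne_of_lt hab
          simp only [if_neg ha, if_pos rfl]
          exact lt_of_lt_of_le (hflab.2 hab) hqlt.le
        · rw [if_neg hb]
          by_cases ha : a = q
          · subst ha
            rw [if_pos rfl]
            have hbeq : f b = M b := by
              refine le_antisymm (hfle b) (not_lt.1 fun hblt => ?_)
              exact hqmax b (Finset.mem_filter.2 ⟨Finset.mem_univ _, hblt⟩) hab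
            rw [hbeq]
            exact hMinc hab
          · rw [if_neg ha]; exact hflab.2 hab
      · simp [hqlt]
      · intro r hr; simp [hr]
    rw [hfraise q] at this
    exact hqp this
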